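/- arXiv:math/0503112 — 6 statements merged into one kernel-verified Lean document; each statement's English description precedes it below -/
import Mathlib

section
/- For every permutation π of {1,...,n+1}, the set of left-to-right almost-minima values of π equals Del_A(π⁻¹) ∪ {1,2}, where Del_A(τ) = { j ∈ {3,...,n+1} : there is at most one i < j with τ(i) < τ(j) }. -/
private lemma card_eq (n : ℕ) (π : Equiv.Perm (Fin (n + 1))) (v : Fin (n + 1)) :
    (Finset.univ.filter fun i => i < π⁻¹ v ∧ π i < v).card =
      (Finset.univ.filter fun i => i < v ∧ π⁻¹ i < π⁻¹ v).card := by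
  apply Finset.card_bij (fun i _ => π i)
  · intro i hi
    simp only [Finset.mem_filter, Finset.mem_univ, true_and] at hi ⊢
    exact ⟨hi.2, by simpa using hi.1⟩
  · intro a _ b _ h
    exact π.injective h
  · intro w hw
    simp only [Finset.mem_filter, Finset.mem_univ, true_and] at hw
    exact ⟨π⁻¹ w, by simpa [hw.1] using hw.2, by simp⟩

/-- `ltram(π) = Del_A(π⁻¹) ∪ {1,2}` for `π ∈ S_{n+1}`, all in 0-indexed form:
`ltram(π)` is the set of values `π(j)` such that at most one `i < j` has
`π(i) < π(j)`; `Del_A(τ)` is the set of positions `j` with `j > 2` (1-indexed),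
i.e. `(j : ℕ) ≥ 2` (0-indexed), such that at most one `i < j` has `τ(i) < τ(j)`;
and the 1-indexed positions `{1,2}` become `{0,1} ⊆ Fin (n+1)`. -/
theorem stmt5 (n : ℕ) (π : Equiv.Perm (Fin (n + 1))) :
    {v : Fin (n + 1) | ∃ j : Fin (n + 1), π j = v ∧
        (Finset.univ.filter fun i => i < j ∧ π i < π j).card ≤ 1} =
      {j : Fin (n + 1) | 2 ≤ (j : ℕ) ∧
        (Finset.univ.filter fun i => i < j ∧ π⁻¹ i < π⁻¹ j).card ≤ 1} ∪ {0, 1} := by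
  ext v
  simp only [Set.mem_setOf_eq, Set.mem_union, Set.mem_insert_iff, Set.mem_singleton_iff]
  have hexist : (∃ j : Fin (n + 1), π j = v ∧
      (Finset.univ.filter fun i => i < j ∧ π i < π j).card ≤ 1) ↔
      (Finset.univ.filter fun i => i < v ∧ π⁻¹ i < π⁻¹ v).card ≤ 1 := by
    rw [← card_eq n π v]
    constructor
    · rintro ⟨j, rfl, hj⟩
      simpa using hj
    · intro h
      exact ⟨π⁻¹ v, by simp, by simpa using h⟩
  rw [hexist]
  have hsmall : (v : ℕ) ≤ 1 →
      (Finset.univ.filter fun i => i < v ∧ π⁻¹ i < π⁻¹ v).card ≤ 1 := by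
    intro hv
    calc (Finset.univ.filter fun i => i < v ∧ π⁻¹ i < π⁻¹ v).card
        ≤ (Finset.Iio v).card := by
          apply Finset.card_le_card
          intro i hi
          simp only [Finset.mem_filter, Finset.mem_univ, true_and] at hi
          simpa using hi.1
      _ = (v : ℕ) := by simp
      _ ≤ 1 := hv
  constructor
  · intro h
    by_cases h2 : 2 ≤ (v : ℕ)
    · exact Or.inl ⟨h2, h⟩
    · right
      push_neg at h2
      have hv : (v : ℕ) = 0 ∨ (v : ℕ) = 1 := by omega
      rcases hv with hv | hv
      · left; exact Fin.ext (by simp [hv])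
      · right
        refine Fin.ext ?_
        have hlt := v.isLt
        rw [hv, Fin.val_one']
        rw [hv] at hlt
        exact (Nat.mod_eq_of_lt hlt).symm
  · rintro (⟨_, h⟩ | rfl | rfl)
    · exact h
    · exact hsmall (by simp)
    · exact hsmall (by simp [Fin.val_one', Nat.mod_le])
end

section
/- For every permutation π of {1,...,n+q-1} and every k ≥ 0, the set ltrm_{k+1}(π) = { π(j) : #{ i < j : π(i) < π(j) } ≤ k } equals Del_{k+1}(π⁻¹) ∪ {1,2,...,k+1}, where Del_{k+1}(τ) = { j ∈ {k+2,...,n+q-1} : #{ i < j : τ(i) < τ(j) } ≤ k }. -/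
lemma card_key {m : ℕ} (π : Equiv.Perm (Fin m)) (v : Fin m) :
    (Finset.univ.filter fun i => i < π⁻¹ v ∧ π i < π (π⁻¹ v)).card =
    (Finset.univ.filter fun w => w < v ∧ π⁻¹ w < π⁻¹ v).card := by
  apply Finset.card_bij (fun i _ => π i)
  · intro a ha
    simp only [Finset.mem_filter, Finset.mem_univ, true_and] at ha ⊢
    rw [show π (π⁻¹ v) = v from π.apply_symm_apply v] at ha
    exact ⟨ha.2, by simpa using ha.1⟩
  · intro a _ b _ h; exact π.injective h
  · intro w hw
    simp only [Finset.mem_filter, Finset.mem_univ, true_and] at hw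
    exact ⟨π⁻¹ w, by simpa [Finset.mem_filter, hw.1] using hw.2, by simp⟩

/-- `ltrm_{k+1}(π) = Del_{k+1}(π⁻¹) ∪ {1,...,k+1}` for `π ∈ S_{n+q-1}`, in 0-indexed
form: `ltrm_{k+1}(π)` is the set of values `π(j)` such that at most `k` indices
`i < j` have `π(i) < π(j)`; `Del_{k+1}(τ)` is the set of positions `j` with
`j > k+1` (1-indexed), i.e. `(j:ℕ) ≥ k+1` (0-indexed), with at most `k` indices
`i < j` satisfying `τ(i) < τ(j)`; and `{1,...,k+1}` becomes `{j | (j:ℕ) ≤ k}`. -/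
theorem stmt6 (n q k : ℕ) (π : Equiv.Perm (Fin (n + q - 1))) :
    {v : Fin (n + q - 1) | ∃ j : Fin (n + q - 1), π j = v ∧
        (Finset.univ.filter fun i => i < j ∧ π i < π j).card ≤ k} =
      {j : Fin (n + q - 1) | k + 1 ≤ (j : ℕ) ∧
        (Finset.univ.filter fun i => i < j ∧ π⁻¹ i < π⁻¹ j).card ≤ k} ∪
      {j : Fin (n + q - 1) | (j : ℕ) ≤ k} := by
  ext v
  simp only [Set.mem_setOf_eq, Set.mem_union]
  constructor
  · rintro ⟨j, rfl, hc⟩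
    have hj : j = π⁻¹ (π j) := by simp
    rw [hj, card_key] at hc
    rcases le_or_gt ((π j : ℕ)) k with h | h
    · exact Or.inr h
    · exact Or.inl ⟨h, hc⟩
  · intro h
    refine ⟨π⁻¹ v, by simp, ?_⟩
    rw [card_key]
    rcases h with ⟨_, hc⟩ | hle
    · exact hc
    · calc (Finset.univ.filter fun w => w < v ∧ π⁻¹ w < π⁻¹ v).card
          ≤ (Finset.univ.filter fun w => w < v).card :=
            Finset.card_le_card (by intro w; simp only [Finset.mem_filter]; tauto)
        _ ≤ k := by
            have : (Finset.univ.filter fun w : Fin (n+q-1) => w < v) = Finset.Iio v := by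
              ext w; simp
            rw [this, Fin.card_Iio]; exact hle
end

section
/- Let v ∈ S_{n+q-1} with canonical presentation v = v_1 ⋯ v_{n+q-2}, v_j ∈ R_j. Then for every q < j ≤ n+q-1, the value j belongs to ltrm_q(v) if and only if v_{j-1} = s_{j-1} s_{j-2} ⋯ s_ℓ for some ℓ ≤ q. -/
/-- The 0-indexed Coxeter generator `s_i = (i, i+1)` of `S_m` (identity if out of range). -/
def gen (m i : ℕ) : Equiv.Perm (Fin m) :=
  if h : i + 1 < m then Equiv.swap ⟨i, by omega⟩ ⟨i + 1, h⟩ else 1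

/-- `R_j` with 0-indexed generators: `{1} ∪ {s_j s_{j-1} ⋯ s_ℓ : 0 ≤ ℓ ≤ j}`. -/
def Rset (m j : ℕ) : Set (Equiv.Perm (Fin m)) :=
  {π | π = 1 ∨ ∃ ℓ ≤ j, π = ((List.range' ℓ (j + 1 - ℓ)).reverse.map (gen m)).prod}

def cyc (m ℓ j : ℕ) : Equiv.Perm (Fin m) :=
  ((List.range' ℓ (j + 1 - ℓ)).reverse.map (gen m)).prod

lemma gen_apply (m i : ℕ) (hi : i + 1 < m) (x : Fin m) :
    ((gen m i) x : ℕ) = if (x:ℕ) = i then i+1 else if (x:ℕ) = i+1 then i else (x:ℕ) := by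
  unfold gen
  rw [dif_pos hi, Equiv.swap_apply_def]
  simp only [Fin.ext_iff]
  split_ifs <;> simp_all

lemma cyc_succ (m ℓ j : ℕ) (h : ℓ ≤ j + 1) :
    cyc m ℓ (j+1) = gen m (j+1) * cyc m ℓ j := by
  unfold cyc
  have h1 : j + 1 + 1 - ℓ = (j + 1 - ℓ) + 1 := by omega
  have h2 : ℓ + 1 * (j + 1 - ℓ) = j + 1 := by omega
  rw [h1, List.range'_concat, List.reverse_append, h2]
  simp

lemma cyc_apply (m ℓ j : ℕ) (hℓ : ℓ ≤ j) (hj : j + 1 < m) (x : Fin m) :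
    ((cyc m ℓ j) x : ℕ) = if (x:ℕ) = ℓ then j + 1
      else if ℓ < (x:ℕ) ∧ (x:ℕ) ≤ j + 1 then (x:ℕ) - 1 else (x:ℕ) := by
  induction j with
  | zero =>
    interval_cases ℓ
    have : cyc m 0 0 = gen m 0 := by unfold cyc; simp
    rw [this, gen_apply m 0 hj]
    split_ifs <;> omega
  | succ j ih =>
    rcases Nat.lt_or_ge j ℓ with hlt | hge
    · -- ℓ = j + 1
      have hℓ' : ℓ = j + 1 := by omega
      subst hℓ'
      have : cyc m (j+1) (j+1) = gen m (j+1) := by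
        unfold cyc; simp
      rw [this, gen_apply m (j+1) hj]
      split_ifs <;> omega
    · rw [cyc_succ m ℓ j (by omega), Equiv.Perm.mul_apply,
        gen_apply m (j+1) hj]
      have hy := ih hge (by omega)
      rw [hy]
      have := x.isLt
      split_ifs <;> omega

lemma cyc_inv_apply (m ℓ j : ℕ) (hℓ : ℓ ≤ j) (hj : j + 1 < m) (x : Fin m) :
    (((cyc m ℓ j)⁻¹) x : ℕ) = if (x:ℕ) = j + 1 then ℓ
      else if ℓ ≤ (x:ℕ) ∧ (x:ℕ) ≤ j then (x:ℕ) + 1 else (x:ℕ) := by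
  have hx := x.isLt
  set r : ℕ := if (x:ℕ) = j + 1 then ℓ
      else if ℓ ≤ (x:ℕ) ∧ (x:ℕ) ≤ j then (x:ℕ) + 1 else (x:ℕ) with hr
  have hrlt : r < m := by rw [hr]; split_ifs <;> omega
  have key : cyc m ℓ j ⟨r, hrlt⟩ = x := by
    apply Fin.ext
    rw [cyc_apply m ℓ j hℓ hj]
    simp only [hr]
    split_ifs <;> omega
  rw [← key, Equiv.Perm.coe_inv, Equiv.symm_apply_apply]

lemma prod_fix (m u : ℕ) (L : List (Equiv.Perm (Fin m)))
    (h : ∀ p ∈ L, ∀ x : Fin m, u ≤ (x:ℕ) → p x = x) :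
    ∀ x : Fin m, u ≤ (x:ℕ) → L.prod x = x := by
  induction L with
  | nil => simp
  | cons p L ih =>
    intro x hx
    rw [List.prod_cons, Equiv.Perm.mul_apply,
      ih (fun p hp => h p (List.mem_cons_of_mem _ hp)) x hx]
    exact h p List.mem_cons_self x hx

lemma mono_aux (m : ℕ) (L : List (Equiv.Perm (Fin m))) :
    ∀ (a : ℕ),
    (∀ (i : ℕ) (hi : i < L.length), L[i] = 1 ∨
      ∃ ℓ ≤ a + i, a + i + 1 < m ∧ L[i] = cyc m ℓ (a + i)) →
    ∀ s t : Fin m, (s:ℕ) < t → (t:ℕ) ≤ a → ((L.prod)⁻¹ s : ℕ) < ((L.prod)⁻¹ t : ℕ) := by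
  induction L with
  | nil => intro a _ s t hst hta; simpa using hst
  | cons p L ih =>
    intro a hL s t hst hta
    have hp := hL 0 (by simp)
    simp only [List.getElem_cons_zero, Nat.add_zero] at hp
    have hL' : ∀ (i : ℕ) (hi : i < L.length), L[i] = 1 ∨
        ∃ ℓ ≤ (a+1) + i, (a+1) + i + 1 < m ∧ L[i] = cyc m ℓ ((a+1) + i) := by
      intro i hi
      have := hL (i+1) (by simpa using Nat.succ_lt_succ hi)
      have e : a + (i+1) = a + 1 + i := by omega
      rw [e] at this
      exact this
    have step : ((p⁻¹ s : Fin m) : ℕ) < (p⁻¹ t : Fin m) ∧ ((p⁻¹ t : Fin m) : ℕ) ≤ a + 1 := by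
      rcases hp with h1 | ⟨ℓ, hℓ, hm, hc⟩
      · rw [h1]; simp; omega
      · rw [hc, cyc_inv_apply m ℓ a hℓ hm s, cyc_inv_apply m ℓ a hℓ hm t]
        constructor <;> [skip; skip] <;> split_ifs <;> omega
    rw [List.prod_cons, mul_inv_rev]
    simp only [Equiv.Perm.mul_apply]
    exact ih (a+1) hL' _ _ step.1 step.2

lemma card_coe_lt (m c : ℕ) (hc : c ≤ m) :
    (Finset.univ.filter fun y : Fin m => (y:ℕ) < c).card = c := by
  have h : ∀ x ∈ Finset.range c, x < m := fun x hx => by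
    simp only [Finset.mem_range] at hx; omega
  have he : (Finset.univ.filter fun y : Fin m => (y:ℕ) < c) = (Finset.range c).attachFin h := by
    ext x
    simp [Finset.mem_attachFin]
  rw [he, Finset.card_attachFin, Finset.card_range]

/-- Let `v ∈ S_{n+q-1}` with canonical presentation `v = v_1 ⋯ v_{n+q-2}`,
`v_j ∈ R_j`.  A value `j` with `q < j ≤ n+q-1` (1-indexed; 0-indexed value
`u = j - 1 ≥ q`) lies in `ltrm_q(v)` (at most `q-1` earlier smaller letters) iff
`v_{j-1} = s_{j-1} s_{j-2} ⋯ s_ℓ` for some `ℓ ≤ q` (0-indexed: the factor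
`g ⟨u-1⟩` equals `s_{u-1} ⋯ s_{ℓ'}` for some `ℓ' ≤ q - 1`). -/
theorem stmt9 (n q : ℕ) (hq : 1 ≤ q) (v : Equiv.Perm (Fin (n + q - 1)))
    (g : Fin (n + q - 2) → Equiv.Perm (Fin (n + q - 1)))
    (hg : ∀ j : Fin (n + q - 2), g j ∈ Rset (n + q - 1) j.1)
    (hv : v = (List.ofFn g).prod)
    (u : Fin (n + q - 1)) (hu : q ≤ (u : ℕ)) :
    (∃ j : Fin (n + q - 1), v j = u ∧
        (Finset.univ.filter fun i => i < j ∧ v i < v j).card ≤ q - 1) ↔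
      ∃ ℓ ≤ q - 1, g ⟨(u : ℕ) - 1, by have := u.isLt; omega⟩ =
        ((List.range' ℓ ((u : ℕ) - ℓ)).reverse.map (gen (n + q - 1))).prod := by
  have hum := u.isLt
  set U := (u : ℕ) with hU
  have hU1 : 1 ≤ U := le_trans hq hu
  have ht : U - 1 < n + q - 2 := by omega
  have hlen : (List.ofFn g).length = n + q - 2 := by simp
  set A : Equiv.Perm (Fin (n+q-1)) := ((List.ofFn g).take (U - 1)).prod with hA
  set G : Equiv.Perm (Fin (n+q-1)) := g ⟨U - 1, ht⟩ with hG
  set Bp : Equiv.Perm (Fin (n+q-1)) := ((List.ofFn g).drop U).prod with hBp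
  -- splitting
  have hsplit : v = A * (G * Bp) := by
    have h2 : (List.ofFn g).drop (U-1) =
        ((List.ofFn g)[U-1]'(by omega)) :: (List.ofFn g).drop (U-1+1) :=
      List.drop_eq_getElem_cons (by omega)
    have h3 : (List.ofFn g)[U-1]'(by omega) = G := by
      rw [hG]; exact List.getElem_ofFn _
    have h4 : U - 1 + 1 = U := by omega
    rw [hv, hA, hG, hBp]
    conv_lhs => rw [← List.take_append_drop (U-1) (List.ofFn g)]
    rw [List.prod_append, h2, h3, h4, List.prod_cons, hG]
  -- A fixes everything ≥ U
  have hAfix : ∀ x : Fin (n+q-1), U ≤ (x:ℕ) → A x = x := by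
    rw [hA]
    apply prod_fix
    intro p hp x hx
    obtain ⟨i, hi, hpi⟩ := List.getElem_of_mem hp
    have hilen : i < U - 1 := by
      have := hi; rw [List.length_take] at this; omega
    rw [List.getElem_take] at hpi
    have hpg : p = g ⟨i, by omega⟩ := by rw [← hpi]; exact List.getElem_ofFn _
    rcases hg ⟨i, by omega⟩ with h1 | ⟨ℓ, hℓ, hc⟩
    · rw [hpg, h1]; rfl
    · have hℓ' : ℓ ≤ i := hℓ
      have hc' : g ⟨i, by omega⟩ = cyc (n+q-1) ℓ i := hc
      rw [hpg, hc']
      apply Fin.ext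
      rw [cyc_apply (n+q-1) ℓ i hℓ' (by omega)]
      split_ifs <;> omega
  have hAlt : ∀ y : Fin (n+q-1), (y:ℕ) < U → (A y : ℕ) < U := by
    intro y hy
    by_contra hcon
    push_neg at hcon
    have h1 := hAfix (A y) hcon
    have := A.injective h1
    omega
  have hAiff : ∀ y : Fin (n+q-1), ((A y : ℕ) < U ↔ (y:ℕ) < U) := by
    intro y
    constructor
    · intro h
      by_contra hcon
      push_neg at hcon
      rw [hAfix y hcon] at h
      omega
    · exact hAlt y
  -- B monotone
  have hBmono : ∀ s t : Fin (n+q-1), (s:ℕ) < t → (t:ℕ) ≤ U →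
      ((Bp⁻¹ s : Fin (n+q-1)) : ℕ) < (Bp⁻¹ t : Fin (n+q-1)) := by
    rw [hBp]
    apply mono_aux
    intro i hi
    have hlen' : ((List.ofFn g).drop U).length = n + q - 2 - U := by
      rw [List.length_drop]; omega
    have hiU : U + i + 1 < n + q - 1 := by rw [hlen'] at hi; omega
    have hgd : ((List.ofFn g).drop U)[i]'hi = g ⟨U + i, by omega⟩ := by
      rw [List.getElem_drop]; exact List.getElem_ofFn _
    rcases hg ⟨U + i, by omega⟩ with h1 | ⟨ℓ, hℓ, hc⟩
    · left; rw [hgd]; exact h1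
    · right
      have hℓ' : ℓ ≤ U + i := hℓ
      have hc' : g ⟨U + i, by omega⟩ = cyc (n+q-1) ℓ (U+i) := hc
      exact ⟨ℓ, hℓ', hiU, by rw [hgd]; exact hc'⟩
  have hBinv : ∀ x : Fin (n+q-1), Bp⁻¹ (Bp x) = x := fun x => by simp only [Equiv.Perm.coe_inv, Equiv.symm_apply_apply]
  -- the RHS product is cyc (U-1)
  have hrhs : ∀ ℓ : ℕ, ((List.range' ℓ (U - ℓ)).reverse.map (gen (n+q-1))).prod
      = cyc (n+q-1) ℓ (U - 1) := by
    intro ℓ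
    rw [cyc, show U - 1 + 1 - ℓ = U - ℓ by omega]
  -- cyc values at U-1
  have hcval : ∀ ℓ : ℕ, ℓ ≤ U - 1 → ∀ x : Fin (n+q-1),
      ((cyc (n+q-1) ℓ (U-1)) x : ℕ) = if (x:ℕ) = ℓ then U
        else if ℓ < (x:ℕ) ∧ (x:ℕ) ≤ U then (x:ℕ) - 1 else (x:ℕ) := by
    intro ℓ hℓ x
    rw [cyc_apply (n+q-1) ℓ (U-1) hℓ (by omega), show U - 1 + 1 = U by omega]
  have hcyc_inj : ∀ ℓ ℓ' : ℕ, ℓ ≤ U - 1 → ℓ' ≤ U - 1 →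
      cyc (n+q-1) ℓ (U-1) = cyc (n+q-1) ℓ' (U-1) → ℓ = ℓ' := by
    intro ℓ ℓ' h1 h2 he
    have h3 := congrArg (fun p : Equiv.Perm (Fin (n+q-1)) =>
      ((p ⟨ℓ', by omega⟩ : Fin (n+q-1)) : ℕ)) he
    rw [hcval ℓ h1, hcval ℓ' h2] at h3
    simp only [Fin.val_mk] at h3
    split_ifs at h3 <;> omega
  have hcyc_ne : ∀ ℓ : ℕ, ℓ ≤ U - 1 → cyc (n+q-1) ℓ (U-1) ≠ 1 := by
    intro ℓ h1 he
    have h3 := congrArg (fun p : Equiv.Perm (Fin (n+q-1)) =>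
      ((p ⟨ℓ, by omega⟩ : Fin (n+q-1)) : ℕ)) he
    simp only [Equiv.Perm.one_apply] at h3
    rw [hcval ℓ h1] at h3
    simp only [Fin.val_mk] at h3
    split_ifs at h3 <;> omega
  -- main equivalence with G/cyc form
  have hmain : (∃ j : Fin (n + q - 1), v j = u ∧
      (Finset.univ.filter fun i => i < j ∧ v i < v j).card ≤ q - 1) ↔
      ∃ ℓ ≤ q - 1, G = cyc (n+q-1) ℓ (U-1) := by
    rcases hg ⟨U - 1, ht⟩ with h1 | ⟨ℓ, hℓ, hc⟩
    · -- G = 1 : both sides false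
      have h1' : G = 1 := h1
      constructor
      · rintro ⟨j, hj, hcard⟩
        exfalso
        have hju : v (Bp⁻¹ u) = u := by
          rw [hsplit]
          simp only [Equiv.Perm.mul_apply, Equiv.Perm.coe_inv, Equiv.apply_symm_apply, h1',
            Equiv.Perm.one_apply]
          exact hAfix u le_rfl
        have hjeq : j = Bp⁻¹ u := v.injective (by rw [hj, hju])
        have hset : (Finset.univ.filter fun i => i < j ∧ v i < v j) =
            (Finset.univ.filter fun i : Fin (n+q-1) => ((Bp i : Fin (n+q-1)) : ℕ) < U) := by
          ext i
          simp only [Finset.mem_filter, Finset.mem_univ, true_and]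
          have hvi : ((v i : Fin (n+q-1)) : ℕ) = A (Bp i) := by
            rw [hsplit]; simp only [Equiv.Perm.mul_apply, h1', Equiv.Perm.one_apply]
          constructor
          · rintro ⟨hij, hlt⟩
            rw [Fin.lt_def, hvi, hj] at hlt
            exact (hAiff _).mp hlt
          · intro hBi
            have hvlt : ((v i : Fin (n+q-1)):ℕ) < U := by
              rw [hvi]; exact (hAiff _).mpr hBi
            refine ⟨?_, by rw [Fin.lt_def, hj]; exact hvlt⟩
            rw [hjeq, Fin.lt_def]
            have h5 := hBmono (Bp i) u hBi le_rfl
            rwa [hBinv] at h5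
        have hcardval : (Finset.univ.filter fun i => i < j ∧ v i < v j).card = U := by
          rw [hset, Finset.card_equiv Bp (fun i => ?_), card_coe_lt (n+q-1) U (by omega)]
          simp
        omega
      · rintro ⟨ℓ, hℓq, heq⟩
        exact absurd (heq.symm.trans h1') (hcyc_ne ℓ (by omega))
    · -- G = cyc ℓ (U-1)
      have hℓ' : ℓ ≤ U - 1 := hℓ
      have hc' : G = cyc (n+q-1) ℓ (U-1) := hc
      have hℓm : ℓ < n + q - 1 := by omega
      have hGu : G ⟨ℓ, hℓm⟩ = u := by
        apply Fin.ext
        rw [hc', hcval ℓ hℓ']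
        simp only [Fin.val_mk]
        split_ifs <;> omega
      have hju : v (Bp⁻¹ ⟨ℓ, hℓm⟩) = u := by
        rw [hsplit]
        simp only [Equiv.Perm.mul_apply, Equiv.Perm.coe_inv, Equiv.apply_symm_apply]
        rw [hGu]
        exact hAfix u le_rfl
      have hviU : ∀ i : Fin (n+q-1), (((v i : Fin (n+q-1))):ℕ) < U ↔
          ((Bp i : Fin (n+q-1)):ℕ) ≤ U ∧ ((Bp i:Fin (n+q-1)):ℕ) ≠ ℓ := by
        intro i
        have hvi : ((v i : Fin (n+q-1)) : ℕ) < U ↔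
            ((G (Bp i) : Fin (n+q-1)) : ℕ) < U := by
          rw [hsplit]; simp only [Equiv.Perm.mul_apply]; exact hAiff _
        rw [hvi, hc', hcval ℓ hℓ']
        have := (Bp i).isLt
        split_ifs <;> omega
      have hset : (Finset.univ.filter fun i => i < Bp⁻¹ ⟨ℓ, hℓm⟩ ∧ v i < v (Bp⁻¹ ⟨ℓ, hℓm⟩)) =
          (Finset.univ.filter fun i : Fin (n+q-1) => ((Bp i : Fin (n+q-1)) : ℕ) < ℓ) := by
        ext i
        simp only [Finset.mem_filter, Finset.mem_univ, true_and]
        constructor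
        · rintro ⟨hij, hlt⟩
          rw [Fin.lt_def, hju] at hlt
          have h2 := (hviU i).mp hlt
          by_contra hcon
          push_neg at hcon
          have hℓlt : ((⟨ℓ, hℓm⟩ : Fin (n+q-1)):ℕ) < Bp i := by
            simp only [Fin.val_mk]; omega
          have h5 := hBmono ⟨ℓ, hℓm⟩ (Bp i) hℓlt h2.1
          rw [hBinv] at h5
          rw [Fin.lt_def] at hij
          omega
        · intro hBi
          have h2 : ((v i:Fin (n+q-1)):ℕ) < U := (hviU i).mpr ⟨by omega, by omega⟩
          refine ⟨?_, by rw [Fin.lt_def, hju]; exact h2⟩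
          rw [Fin.lt_def]
          have h5 := hBmono (Bp i) ⟨ℓ, hℓm⟩ (by simpa using hBi) (by simp; omega)
          rwa [hBinv] at h5
      have hcardval :
          (Finset.univ.filter fun i => i < Bp⁻¹ ⟨ℓ, hℓm⟩ ∧ v i < v (Bp⁻¹ ⟨ℓ, hℓm⟩)).card = ℓ := by
        rw [hset, Finset.card_equiv Bp (fun i => ?_), card_coe_lt (n+q-1) ℓ (by omega)]
        simp
      constructor
      · rintro ⟨j, hj, hcard⟩
        have hjeq : j = Bp⁻¹ ⟨ℓ, hℓm⟩ := v.injective (by rw [hj, hju])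
        rw [hjeq, hcardval] at hcard
        exact ⟨ℓ, hcard, hc'⟩
      · rintro ⟨ℓ'', hℓ''q, heq⟩
        have : ℓ = ℓ'' := hcyc_inj ℓ ℓ'' hℓ' (by omega) (hc' ▸ heq)
        exact ⟨Bp⁻¹ ⟨ℓ, hℓm⟩, hju, by rw [hcardval]; omega⟩
  rw [hmain]
  constructor
  · rintro ⟨ℓ', h1, h2⟩
    exact ⟨ℓ', h1, by rw [hrhs ℓ']; exact h2⟩
  · rintro ⟨ℓ', h1, h2⟩
    rw [hrhs ℓ'] at h2
    exact ⟨ℓ', h1, h2⟩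
end

section
/- Let X be a linearly ordered alphabet, x ∈ X, and r a nonempty word over X whose last letter is ≤ x (respectively > x). Then r has a unique decomposition r = r^1 r^2 ⋯ r^p into nonempty factors such that in each factor, the last letter is ≤ x (resp. > x) and all earlier letters are > x (resp. ≤ x). -/
/-- A factor whose last letter is `≤ x` and all earlier letters are `> x`. -/
def FactorBelow {X : Type*} [LinearOrder X] (x : X) (f : List X) : Prop :=
  ∃ g y, f = g ++ [y] ∧ y ≤ x ∧ ∀ a ∈ g, x < a

/-- A factor whose last letter is `> x` and all earlier letters are `≤ x`. -/
def FactorAbove {X : Type*} [LinearOrder X] (x : X) (f : List X) : Prop :=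
  ∃ g y, f = g ++ [y] ∧ x < y ∧ ∀ a ∈ g, a ≤ x

section Aux

variable {X : Type*} (P : X → Prop)

/-- Generic factor: ends in a letter satisfying `P`, all earlier letters fail `P`. -/
def Fac (f : List X) : Prop := ∃ g y, f = g ++ [y] ∧ P y ∧ ∀ a ∈ g, ¬ P a

lemma fac_ne_nil {f : List X} (h : Fac P f) : f ≠ [] := by
  obtain ⟨g, y, rfl, -, -⟩ := h; simp

lemma fac_exists : ∀ r : List X, (∀ z, r.getLast? = some z → P z) →
    ∃ L : List (List X), L.flatten = r ∧ ∀ f ∈ L, Fac P f := by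
  intro r
  induction r with
  | nil => exact fun _ => ⟨[], rfl, by simp⟩
  | cons a t ih =>
    intro h
    rcases t with _ | ⟨b, t'⟩
    · refine ⟨[[a]], by simp, ?_⟩
      intro f hf
      simp only [List.mem_singleton] at hf
      subst hf
      exact ⟨[], a, rfl, h a rfl, by simp⟩
    · obtain ⟨L, hL, hLf⟩ := ih (fun z hz => h z (by rw [List.getLast?_cons_cons]; exact hz))
      by_cases hPa : P a
      · refine ⟨[a] :: L, by simp [hL], ?_⟩
        intro f hf
        rcases List.mem_cons.1 hf with rfl | hf
        · exact ⟨[], a, rfl, hPa, by simp⟩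
        · exact hLf f hf
      · rcases L with _ | ⟨f, L'⟩
        · simp at hL
        · obtain ⟨g, z, rfl, hz, hg⟩ := hLf _ List.mem_cons_self
          refine ⟨(a :: g ++ [z]) :: L', ?_, ?_⟩
          · simpa using hL
          · intro f hf
            rcases List.mem_cons.1 hf with rfl | hf
            · refine ⟨a :: g, z, rfl, hz, ?_⟩
              intro b hb
              rcases List.mem_cons.1 hb with rfl | hb
              · exact hPa
              · exact hg b hb
            · exact hLf f (List.mem_cons_of_mem _ hf)

lemma fac_prefix {f1 f2 : List X} (h1 : Fac P f1) (h2 : Fac P f2) (hp : f1 <+: f2) :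
    f1 = f2 := by
  obtain ⟨d, rfl⟩ := hp
  rcases d.eq_nil_or_concat with rfl | ⟨d', z, rfl⟩
  · simp
  · exfalso
    obtain ⟨g1, y1, rfl, hy1, hg1⟩ := h1
    obtain ⟨g2, y2, he, hy2, hg2⟩ := h2
    have : g2 = g1 ++ [y1] ++ d' := by
      have he2 : (g1 ++ [y1] ++ d') ++ [z] = g2 ++ [y2] := by
        rw [← he]; simp [List.concat_eq_append]
      exact (List.append_inj' he2 rfl).1.symm
    exact hg2 y1 (by simp [this]) hy1

lemma fac_unique : ∀ L1 L2 : List (List X), (∀ f ∈ L1, Fac P f) → (∀ f ∈ L2, Fac P f) →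
    L1.flatten = L2.flatten → L1 = L2 := by
  intro L1
  induction L1 with
  | nil =>
    intro L2 _ h2 hf
    rcases L2 with _ | ⟨f, L2⟩
    · rfl
    · exfalso
      have := fac_ne_nil P (h2 f List.mem_cons_self)
      simp at hf
      exact this hf.1
  | cons f1 t1 ih =>
    intro L2 h1 h2 hf
    rcases L2 with _ | ⟨f2, t2⟩
    · exfalso
      have := fac_ne_nil P (h1 f1 List.mem_cons_self)
      simp at hf
      exact this hf.1
    · simp only [List.flatten_cons] at hf
      have hpre : f1 <+: f2 ∨ f2 <+: f1 := by
        rcases le_total f1.length f2.length with h | h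
        · exact Or.inl (List.prefix_of_prefix_length_le ⟨t1.flatten, hf⟩
            ⟨t2.flatten, rfl⟩ h)
        · exact Or.inr (List.prefix_of_prefix_length_le ⟨t2.flatten, hf.symm⟩
            ⟨t1.flatten, rfl⟩ h)
      have hff : f1 = f2 := by
        rcases hpre with h | h
        · exact fac_prefix P (h1 _ List.mem_cons_self) (h2 _ List.mem_cons_self) h
        · exact (fac_prefix P (h2 _ List.mem_cons_self) (h1 _ List.mem_cons_self) h).symm
      subst hff
      have : t1.flatten = t2.flatten := List.append_cancel_left hf
      rw [ih t2 (fun f hf => h1 f (List.mem_cons_of_mem _ hf))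
        (fun f hf => h2 f (List.mem_cons_of_mem _ hf)) this]

lemma fac_below {X : Type*} [LinearOrder X] (x : X) (f : List X) :
    Fac (fun a => a ≤ x) f ↔ FactorBelow x f := by
  simp [Fac, FactorBelow, not_le]

lemma fac_above {X : Type*} [LinearOrder X] (x : X) (f : List X) :
    Fac (fun a => x < a) f ↔ FactorAbove x f := by
  simp [Fac, FactorAbove, not_lt]

end Aux

/-- Unique decomposition of a nonempty word into the factors used in the
definition of Foata's `γ_x`: if the last letter of `r` is `≤ x` (resp. `> x`),
then `r` factors uniquely into (nonempty) blocks whose last letter is `≤ x`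
(resp. `> x`) and whose other letters are all `> x` (resp. `≤ x`). -/
theorem stmt11 {X : Type*} [LinearOrder X] (x : X) (r : List X) (y : X)
    (hy : r.getLast? = some y) :
    (y ≤ x → ∃! L : List (List X), L.flatten = r ∧ ∀ f ∈ L, FactorBelow x f) ∧
    (x < y → ∃! L : List (List X), L.flatten = r ∧ ∀ f ∈ L, FactorAbove x f) := by
  constructor
  · intro h
    obtain ⟨L, hL, hLf⟩ := fac_exists (fun a => a ≤ x) r
      (fun z hz => by rw [hy] at hz; injection hz with h'; exact h' ▸ h)
    refine ⟨L, ⟨hL, fun f hf => (fac_below x f).1 (hLf f hf)⟩, ?_⟩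
    intro L' ⟨hL', hL'f⟩
    exact fac_unique _ L' L (fun f hf => (fac_below x f).2 (hL'f f hf)) hLf (hL'.trans hL.symm)
  · intro h
    obtain ⟨L, hL, hLf⟩ := fac_exists (fun a => x < a) r
      (fun z hz => by rw [hy] at hz; injection hz with h'; exact h' ▸ h)
    refine ⟨L, ⟨hL, fun f hf => (fac_above x f).1 (hLf f hf)⟩, ?_⟩
    intro L' ⟨hL', hL'f⟩
    exact fac_unique _ L' L (fun f hf => (fac_above x f).2 (hL'f f hf)) hLf (hL'.trans hL.symm)
end

section
/- Foata's second fundamental transformation Φ commutes with complementation: for every σ ∈ S_n, Φ(com(σ)) = com(Φ(σ)), where com(σ)(i) = n+1-σ(i). -/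
def gammaGo (p : ℤ → Bool) : List ℤ → List ℤ → List ℤ
  | acc, [] => acc.reverse
  | acc, c :: d =>
      if p c then c :: (acc.reverse ++ gammaGo p [] d) else gammaGo p (c :: acc) d

/-- Foata's operation `γ_x`. -/
def gammaF (x : ℤ) (r : List ℤ) : List ℤ :=
  match r.getLast? with
  | none => []
  | some y =>
      if y ≤ x then gammaGo (fun z => decide (z ≤ x)) [] r
      else gammaGo (fun z => decide (x < z)) [] r

/-- Foata's second fundamental transformation on words:
`Φ([]) = []` and `Φ(r x) = γ_x(Φ(r)) x`. -/
def foataF (r : List ℤ) : List ℤ :=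
  r.foldl (fun st y => gammaF y st ++ [y]) []

lemma gammaGo_perm (p : ℤ → Bool) (acc d : List ℤ) :
    (gammaGo p acc d).Perm (acc.reverse ++ d) := by
  induction d generalizing acc with
  | nil => simp [gammaGo]
  | cons a d ih =>
    simp only [gammaGo]
    split
    · refine (((ih []).append_left acc.reverse).cons a).trans ?_
      simpa using List.perm_middle.symm
    · refine (ih (a :: acc)).trans ?_
      simp

lemma gammaF_perm (x : ℤ) (r : List ℤ) : (gammaF x r).Perm r := by
  unfold gammaF
  split
  · next heq => simp [List.getLast?_eq_none_iff.mp heq]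
  · split <;> simpa using gammaGo_perm _ [] r

lemma gammaGo_map (p p' : ℤ → Bool) (c : ℤ → ℤ) (acc d : List ℤ)
    (h : ∀ z ∈ d, p (c z) = p' z) :
    gammaGo p (acc.map c) (d.map c) = (gammaGo p' acc d).map c := by
  induction d generalizing acc with
  | nil => simp [gammaGo, List.map_reverse]
  | cons a d ih =>
    simp only [List.map_cons, gammaGo]
    rw [h a (by simp)]
    split
    · have := ih [] (fun z hz => h z (by simp [hz]))
      simp only [List.map_nil] at this
      simp [this, List.map_reverse]
    · exact ih (a :: acc) (fun z hz => h z (by simp [hz]))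

lemma gammaF_map (K x : ℤ) (r : List ℤ) (hx : x ∉ r) :
    gammaF (K - x) (r.map (fun a => K - a)) = (gammaF x r).map (fun a => K - a) := by
  unfold gammaF
  rw [List.getLast?_map]
  cases hr : r.getLast? with
  | none => simp
  | some y =>
    have hy : y ∈ r := by
      obtain ⟨hne, rfl⟩ := List.mem_getLast?_eq_getLast (show y ∈ r.getLast? by rw [hr]; rfl)
      exact List.getLast_mem hne
    have hyx : y ≠ x := fun h => hx (h ▸ hy)
    simp only [Option.map_some]
    by_cases hle : y ≤ x
    · rw [if_pos hle, if_neg (by omega : ¬ K - y ≤ K - x)]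
      have := gammaGo_map (fun z => decide (K - x < z)) (fun z => decide (z ≤ x))
        (fun a => K - a) [] r (fun z hz => by
          have : z ≠ x := fun h => hx (h ▸ hz)
          simp only [decide_eq_decide]; omega)
      simpa using this
    · rw [if_neg hle, if_pos (by omega : K - y ≤ K - x)]
      have := gammaGo_map (fun z => decide (z ≤ K - x)) (fun z => decide (x < z))
        (fun a => K - a) [] r (fun z hz => by
          have : z ≠ x := fun h => hx (h ▸ hz)
          simp only [decide_eq_decide]; omega)
      simpa using this

lemma foataF_concat (r : List ℤ) (x : ℤ) :
    foataF (r ++ [x]) = gammaF x (foataF r) ++ [x] := by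
  simp [foataF, List.foldl_append]

lemma foataF_perm (r : List ℤ) : (foataF r).Perm r := by
  induction r using List.reverseRecOn with
  | nil => simp [foataF]
  | append_singleton r x ih =>
    rw [foataF_concat]
    exact ((gammaF_perm x (foataF r)).trans ih).append_right _

lemma foataF_map (K : ℤ) (r : List ℤ) (h : r.Nodup) :
    foataF (r.map (fun a => K - a)) = (foataF r).map (fun a => K - a) := by
  induction r using List.reverseRecOn with
  | nil => simp [foataF]
  | append_singleton r x ih =>
    have hr : r.Nodup := (List.nodup_append.mp h).1
    have hxr : x ∉ r := by
      intro hm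
      exact (List.nodup_append'.mp h).2.2 hm (by simp)
    have hx : x ∉ foataF r := fun hmem => hxr ((foataF_perm r).mem_iff.mp hmem)
    rw [List.map_append, List.map_singleton, foataF_concat, foataF_concat, ih hr,
      gammaF_map K x _ hx, List.map_append, List.map_singleton]

/-- The one-line word (with letters `1,…,n` as integers) of `σ ∈ S_n`. -/
def word {n : ℕ} (σ : Equiv.Perm (Fin n)) : List ℤ :=
  List.ofFn fun i => ((σ i : ℕ) : ℤ) + 1

/-- `Φ` commutes with complementation: `Φ(com σ) = com(Φ σ)`, where the
complement replaces each letter `a` of the word by `n+1-a`. -/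
theorem stmt13 (n : ℕ) (σ : Equiv.Perm (Fin n)) :
    foataF ((word σ).map fun a => ((n : ℤ) + 1) - a) =
      (foataF (word σ)).map fun a => ((n : ℤ) + 1) - a := by
  have hnd : (word σ).Nodup := by
    rw [word, List.nodup_ofFn]
    intro i j hij
    have hij' : ((σ i : ℕ) : ℤ) + 1 = ((σ j : ℕ) : ℤ) + 1 := hij
    exact σ.injective (Fin.ext (by exact_mod_cast add_right_cancel hij'))
  exact foataF_map ((n : ℤ) + 1) (word σ) hnd
end

section
/- MacMahon's equidistribution theorem: the major index and the inversion number are equidistributed over S_n, i.e., Σ_{σ ∈ S_n} q^{maj(σ)} = Σ_{σ ∈ S_n} q^{inv(σ)}. -/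
/-- Number of inversions of `σ ∈ S_n`. -/
def invNum {n : ℕ} (σ : Equiv.Perm (Fin n)) : ℕ :=
  (Finset.univ.filter fun p : Fin n × Fin n => p.1 < p.2 ∧ σ p.2 < σ p.1).card

def valAt {n : ℕ} (σ : Equiv.Perm (Fin n)) (i : ℕ) : ℕ :=
  if h : i < n then (σ ⟨i, h⟩ : ℕ) else 0

/-- 0-indexed descent set; a 0-indexed descent `i` is the 1-indexed descent `i+1`. -/
def desSet {n : ℕ} (σ : Equiv.Perm (Fin n)) : Finset ℕ :=
  (Finset.range (n - 1)).filter fun i => valAt σ (i + 1) < valAt σ i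

/-- The major index `maj σ = Σ_{i ∈ Des σ} i` (1-indexed). -/
def majP {n : ℕ} (σ : Equiv.Perm (Fin n)) : ℕ :=
  ∑ i ∈ desSet σ, (i + 1)

namespace MacMahonAux

open Finset

def c (f : ℕ → ℕ) (i : ℕ) : ℕ := if f (i+1) < f i then 1 else 0
def F (f : ℕ → ℕ) (i : ℕ) : ℕ := if f (i+1) < f i then i+1 else 0
def majF (f : ℕ → ℕ) (L : ℕ) : ℕ := ∑ i ∈ Finset.range (L-1), F f i
def cnt (f : ℕ → ℕ) (L p : ℕ) : ℕ := ∑ i ∈ Finset.Ico p (L-1), c f i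
def incr (f : ℕ → ℕ) (L p : ℕ) : ℕ :=
  if p = L then 0 else if 1 ≤ p ∧ f p < f (p-1) then 1 + cnt f L p else p + 1 + cnt f L p

lemma c_le_one (f i) : c f i ≤ 1 := by unfold c; split <;> omega

lemma sum_c_le (f : ℕ → ℕ) (a b : ℕ) : ∑ i ∈ Finset.Ico a b, c f i ≤ b - a := by
  calc ∑ i ∈ Finset.Ico a b, c f i ≤ ∑ i ∈ Finset.Ico a b, 1 :=
        Finset.sum_le_sum fun i _ => c_le_one f i
    _ = b - a := by simp [Nat.card_Ico]

lemma cnt_le (f L p) : cnt f L p ≤ L - 1 - p := by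
  exact sum_c_le f p (L-1)

lemma cnt_split (f : ℕ → ℕ) (L : ℕ) {p p' : ℕ} (h1 : p ≤ p') (h2 : p' ≤ L - 1) :
    cnt f L p = (∑ i ∈ Finset.Ico p p', c f i) + cnt f L p' := by
  rw [cnt, cnt, ← Finset.sum_Ico_consecutive _ h1 h2]

lemma incr_le (f : ℕ → ℕ) {L p : ℕ} (hp : p ≤ L) : incr f L p ≤ L := by
  unfold incr
  rcases eq_or_lt_of_le hp with h | h
  · simp [h]
  · have hc := cnt_le f L p
    rw [if_neg (by omega)]
    split <;> omega

lemma incr_descent_le {f : ℕ → ℕ} {L p : ℕ} (hp : p < L) (h1 : 1 ≤ p) (h2 : f p < f (p-1)) :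
    incr f L p ≤ cnt f L 0 := by
  have hs : cnt f L 0 = (∑ i ∈ Finset.Ico 0 (p-1), c f i) + cnt f L (p-1) :=
    cnt_split f L (by omega) (by omega)
  have hs2 : cnt f L (p-1) = (∑ i ∈ Finset.Ico (p-1) p, c f i) + cnt f L p :=
    cnt_split f L (by omega) (by omega)
  have hcp : ∑ i ∈ Finset.Ico (p-1) p, c f i = 1 := by
    have : Finset.Ico (p-1) p = {p-1} := by
      ext x; simp [Finset.mem_Ico]; omega
    rw [this, Finset.sum_singleton]
    have : p - 1 + 1 = p := by omega
    simp [c, this, h2]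
  rw [incr, if_neg (by omega), if_pos ⟨h1, h2⟩]
  omega

lemma incr_rise_ge {f : ℕ → ℕ} {L p : ℕ} (hp : p < L) (h2 : ¬ (1 ≤ p ∧ f p < f (p-1))) :
    cnt f L 0 + 1 ≤ incr f L p := by
  have hs : cnt f L 0 = (∑ i ∈ Finset.Ico 0 p, c f i) + cnt f L p :=
    cnt_split f L (by omega) (by omega)
  have hb : ∑ i ∈ Finset.Ico 0 p, c f i ≤ p := by simpa using sum_c_le f 0 p
  rw [incr, if_neg (by omega), if_neg h2]
  omega

lemma incr_pos {f : ℕ → ℕ} {L p : ℕ} (hp : p < L) : 1 ≤ incr f L p := by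
  rw [incr, if_neg (by omega)]; split <;> omega

lemma incr_descent_strict {f : ℕ → ℕ} {L p p' : ℕ} (hpp : p < p') (hp' : p' < L)
    (h1 : 1 ≤ p ∧ f p < f (p-1)) (h1' : 1 ≤ p' ∧ f p' < f (p'-1)) :
    incr f L p' < incr f L p := by
  have hs : cnt f L p = (∑ i ∈ Finset.Ico p (p'-1), c f i) + cnt f L (p'-1) :=
    cnt_split f L (by omega) (by omega)
  have hs2 : cnt f L (p'-1) = (∑ i ∈ Finset.Ico (p'-1) p', c f i) + cnt f L p' :=
    cnt_split f L (by omega) (by omega)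
  have hcp : ∑ i ∈ Finset.Ico (p'-1) p', c f i = 1 := by
    have : Finset.Ico (p'-1) p' = {p'-1} := by
      ext x; simp [Finset.mem_Ico]; omega
    rw [this, Finset.sum_singleton]
    have : p' - 1 + 1 = p' := by omega
    simp [c, this, h1'.2]
  rw [incr, if_neg (by omega : ¬ p' = L), if_pos h1', incr, if_neg (by omega : ¬ p = L), if_pos h1]
  omega

lemma incr_rise_strict {f : ℕ → ℕ} {L p p' : ℕ} (hpp : p < p') (hp' : p' < L)
    (h1 : ¬ (1 ≤ p ∧ f p < f (p-1))) (h1' : ¬ (1 ≤ p' ∧ f p' < f (p'-1))) :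
    incr f L p < incr f L p' := by
  have hs : cnt f L p = (∑ i ∈ Finset.Ico p p', c f i) + cnt f L p' :=
    cnt_split f L (by omega) (by omega)
  have hs2 : ∑ i ∈ Finset.Ico p p', c f i
      = (∑ i ∈ Finset.Ico p (p'-1), c f i) + ∑ i ∈ Finset.Ico (p'-1) p', c f i := by
    rw [← Finset.sum_Ico_consecutive _ (by omega : p ≤ p'-1) (by omega : p'-1 ≤ p')]
  have hcp : ∑ i ∈ Finset.Ico (p'-1) p', c f i = 0 := by
    have : Finset.Ico (p'-1) p' = {p'-1} := by
      ext x; simp [Finset.mem_Ico]; omega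
    rw [this, Finset.sum_singleton]
    have hp1 : p' - 1 + 1 = p' := by omega
    have : ¬ f (p' - 1 + 1) < f (p'-1) := by rw [hp1]; intro hlt; exact h1' ⟨by omega, hlt⟩
    simp [c, this]
  have hb : ∑ i ∈ Finset.Ico p (p'-1), c f i ≤ p' - 1 - p := sum_c_le f p (p'-1)
  rw [incr, if_neg (by omega : ¬ p = L), if_neg h1, incr, if_neg (by omega : ¬ p' = L), if_neg h1']
  omega

lemma incr_injOn (f : ℕ → ℕ) (L : ℕ) {p p' : ℕ} (hp : p ≤ L) (hp' : p' ≤ L)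
    (h : incr f L p = incr f L p') : p = p' := by
  by_contra hne
  wlog hlt : p < p' generalizing p p'
  · exact this hp' hp h.symm (Ne.symm hne) (by omega)
  have hpL : p < L := by omega
  rcases eq_or_lt_of_le hp' with hL | hL
  · have := incr_pos (f := f) hpL
    have h2 : incr f L p = 0 := by rw [h, hL, incr, if_pos rfl]
    omega
  · by_cases hd : 1 ≤ p ∧ f p < f (p-1) <;> by_cases hd' : 1 ≤ p' ∧ f p' < f (p'-1)
    · exact absurd h (by have := incr_descent_strict hlt hL hd hd'; omega)
    · have a1 := incr_descent_le hpL hd.1 hd.2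
      have a2 := incr_rise_ge hL hd'
      omega
    · have a1 := incr_descent_le hL hd'.1 hd'.2
      have a2 := incr_rise_ge hpL hd
      omega
    · exact absurd h (by have := incr_rise_strict hlt hL hd hd'; omega)

/-- The key sum identity: the increments hit each of `0..L` exactly once. -/
lemma sum_pow_incr (f : ℕ → ℕ) (L : ℕ) :
    ∑ p ∈ Finset.range (L+1), (Polynomial.X : Polynomial ℤ) ^ (incr f L p)
      = ∑ k ∈ Finset.range (L+1), (Polynomial.X : Polynomial ℤ) ^ k := by
  have hinj : Set.InjOn (incr f L) (Finset.range (L+1)) := by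
    intro a ha b hb hab
    simp only [Finset.coe_range, Set.mem_Iio] at ha hb
    exact incr_injOn f L (by omega) (by omega) hab
  have himg : (Finset.range (L+1)).image (incr f L) = Finset.range (L+1) := by
    apply Finset.eq_of_subset_of_card_le
    · intro x hx
      simp only [Finset.mem_image] at hx
      obtain ⟨p, hp, rfl⟩ := hx
      simp only [Finset.mem_range] at hp ⊢
      have := incr_le f (p := p) (L := L) (by omega)
      omega
    · rw [Finset.card_image_of_injOn hinj]
  conv_rhs => rw [← himg]
  rw [Finset.sum_image (by intro a ha b hb hab; exact hinj ha hb hab)]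

lemma majF_insert (f g : ℕ → ℕ) (L p M : ℕ) (hp : p ≤ L)
    (hfM : ∀ i, i < L → f i < M)
    (hg1 : ∀ i, i < p → g i = f i)
    (hg2 : g p = M)
    (hg3 : ∀ i, p ≤ i → i < L → g (i+1) = f i) :
    majF g (L+1) = majF f L + incr f L p := by
  rcases eq_or_lt_of_le hp with heq | hpL
  · -- p = L
    subst heq
    rw [incr, if_pos rfl, Nat.add_zero]
    rcases Nat.eq_zero_or_pos p with rfl | hL
    · simp [majF]
    · have hL1 : p = (p-1) + 1 := by omega
      rw [majF, majF, Nat.add_sub_cancel, hL1, Finset.sum_range_succ, ← hL1]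
      have hlast : F g (p-1) = 0 := by
        rw [F, if_neg]
        rw [show p - 1 + 1 = p by omega, hg2, hg1 _ (by omega)]
        exact not_lt.2 (le_of_lt (hfM _ (by omega)))
      rw [hlast, Nat.add_zero]
      apply Finset.sum_congr rfl
      intro i hi
      simp only [Finset.mem_range] at hi
      rw [F, F, hg1 _ (by omega), hg1 _ (by omega)]
  · -- p < L
    have key : majF g (L+1) + F f (p-1) * (if 1 ≤ p then 1 else 0)
        = majF f L + (p+1) + cnt f L p := by
      have hB : ∑ i ∈ Finset.Ico p L, F g i
          = (p+1) + (∑ j ∈ Finset.Ico p (L-1), F f j + cnt f L p) := by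
        rw [Finset.sum_eq_sum_Ico_succ_bot hpL]
        have hFgp : F g p = p + 1 := by
          rw [F, if_pos]
          rw [hg3 p le_rfl hpL, hg2]
          exact hfM p hpL
        have hre : ∑ i ∈ Finset.Ico (p+1) L, F g i = ∑ j ∈ Finset.Ico p (L-1), F g (j+1) := by
          rw [Finset.sum_Ico_eq_sum_range, Finset.sum_Ico_eq_sum_range]
          rw [show L - (p+1) = L - 1 - p by omega]
          apply Finset.sum_congr rfl
          intro i _
          rw [show p + 1 + i = p + i + 1 by omega]
        have hterm : ∀ j ∈ Finset.Ico p (L-1), F g (j+1) = F f j + c f j := by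
          intro j hj
          simp only [Finset.mem_Ico] at hj
          rw [F, F, c, hg3 (j+1) (by omega) (by omega), hg3 j hj.1 (by omega)]
          split <;> omega
        rw [hre, Finset.sum_congr rfl hterm, Finset.sum_add_distrib, hFgp, cnt]
      have hsplit : majF g (L+1) = (∑ i ∈ Finset.range p, F g i) + ∑ i ∈ Finset.Ico p L, F g i := by
        rw [majF, Nat.add_sub_cancel, Finset.range_eq_Ico, Finset.range_eq_Ico]
        exact (Finset.sum_Ico_consecutive (F g) (Nat.zero_le p) (le_of_lt hpL)).symm
      rcases Nat.eq_zero_or_pos p with rfl | hp1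
      · rw [hsplit, hB]
        simp only [Finset.range_zero, Finset.sum_empty, Nat.zero_add, if_neg (by omega : ¬ 1 ≤ 0)]
        rw [majF, Finset.range_eq_Ico]
        ring
      · obtain ⟨q, rfl⟩ : ∃ q, p = q + 1 := ⟨p - 1, by omega⟩
        have hA : ∑ i ∈ Finset.range (q+1), F g i = ∑ i ∈ Finset.range q, F f i := by
          rw [Finset.sum_range_succ]
          have : F g q = 0 := by
            rw [F, if_neg]
            rw [hg2, hg1 _ (by omega)]
            exact not_lt.2 (le_of_lt (hfM _ (by omega)))
          rw [this, Nat.add_zero]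
          apply Finset.sum_congr rfl
          intro i hi
          simp only [Finset.mem_range] at hi
          rw [F, F, hg1 _ (by omega), hg1 _ (by omega)]
        have hf : majF f L = (∑ i ∈ Finset.range q, F f i) + F f q + ∑ j ∈ Finset.Ico (q+1) (L-1), F f j := by
          rw [majF, Finset.range_eq_Ico,
            ← Finset.sum_Ico_consecutive _ (Nat.zero_le q) (by omega : q ≤ L - 1),
            Finset.sum_eq_sum_Ico_succ_bot (by omega : q < L - 1), ← Finset.range_eq_Ico]
          ring
        rw [hsplit, hA, hB, hf]
        simp only [if_pos (by omega : 1 ≤ q + 1), Nat.add_sub_cancel, Nat.mul_one]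
        ring
    by_cases hd : 1 ≤ p ∧ f p < f (p-1)
    · have hFf : F f (p-1) = p := by
        rw [F, if_pos (by rw [show p - 1 + 1 = p by omega]; exact hd.2),
          show p - 1 + 1 = p by omega]
      rw [incr, if_neg (by omega), if_pos hd]
      rw [hFf, if_pos hd.1, Nat.mul_one] at key
      omega
    · have hFf : F f (p-1) * (if 1 ≤ p then 1 else 0) = 0 := by
        rcases Nat.eq_zero_or_pos p with rfl | hp1
        · simp
        · rw [F, if_neg (by rw [show p - 1 + 1 = p by omega]; intro hlt; exact hd ⟨hp1, hlt⟩)]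
          simp
      rw [incr, if_neg (by omega), if_neg hd]
      rw [hFf] at key
      omega

/-! ### The insertion bijection on permutations -/

def ins {m : ℕ} (τ : Equiv.Perm (Fin m)) (p : Fin (m+1)) : Equiv.Perm (Fin (m+1)) :=
  (finSuccEquiv' p).trans ((Equiv.optionCongr τ).trans (finSuccEquiv' (Fin.last m)).symm)

lemma ins_apply_self {m : ℕ} (τ : Equiv.Perm (Fin m)) (p : Fin (m+1)) :
    ins τ p p = Fin.last m := by
  simp [ins, finSuccEquiv'_at, finSuccEquiv'_symm_none]

lemma ins_apply_succAbove {m : ℕ} (τ : Equiv.Perm (Fin m)) (p : Fin (m+1)) (j : Fin m) :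
    ins τ p (p.succAbove j) = (τ j).castSucc := by
  simp [ins, finSuccEquiv'_succAbove, finSuccEquiv'_symm_some, Fin.succAbove_last]

lemma ins_bijective (m : ℕ) :
    Function.Bijective (fun x : Equiv.Perm (Fin m) × Fin (m+1) => ins x.1 x.2) := by
  rw [Fintype.bijective_iff_injective_and_card]
  constructor
  · rintro ⟨τ, p⟩ ⟨τ', p'⟩ h
    simp only at h
    have hp : p = p' := by
      have h1 : ins τ' p' p = Fin.last m := by rw [← h]; exact ins_apply_self τ p
      have h2 : ins τ' p' p' = Fin.last m := ins_apply_self τ' p'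
      exact (Equiv.injective (ins τ' p')) (h1.trans h2.symm)
    subst hp
    have hτ : τ = τ' := by
      apply Equiv.ext
      intro j
      have h1 : ins τ p (p.succAbove j) = ins τ' p (p.succAbove j) := by rw [h]
      rw [ins_apply_succAbove, ins_apply_succAbove] at h1
      exact Fin.castSucc_injective m h1
    rw [hτ]
  · simp [Fintype.card_perm, Fintype.card_fin, Nat.factorial_succ, Nat.mul_comm]

/-! ### valAt of an inserted permutation -/

lemma valAt_lt {m : ℕ} (τ : Equiv.Perm (Fin m)) (i : ℕ) (hi : i < m) : valAt τ i < m := by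
  rw [valAt, dif_pos hi]
  exact (τ ⟨i, hi⟩).is_lt

lemma valAt_ins_lt {m : ℕ} (τ : Equiv.Perm (Fin m)) (p : Fin (m+1)) (i : ℕ) (hi : i < p.val) :
    valAt (ins τ p) i = valAt τ i := by
  have him : i < m := by have := p.is_le; omega
  have hi1 : i < m + 1 := by omega
  rw [valAt, dif_pos hi1, valAt, dif_pos him]
  have : (⟨i, hi1⟩ : Fin (m+1)) = p.succAbove ⟨i, him⟩ := by
    rw [Fin.succAbove_of_castSucc_lt]
    · rfl
    · rw [Fin.lt_def]; exact hi
  rw [this, ins_apply_succAbove]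
  simp

lemma valAt_ins_self {m : ℕ} (τ : Equiv.Perm (Fin m)) (p : Fin (m+1)) :
    valAt (ins τ p) p.val = m := by
  rw [valAt, dif_pos p.is_lt]
  have : (⟨p.val, p.is_lt⟩ : Fin (m+1)) = p := rfl
  rw [this, ins_apply_self]
  simp

lemma valAt_ins_ge {m : ℕ} (τ : Equiv.Perm (Fin m)) (p : Fin (m+1)) (i : ℕ)
    (h1 : p.val ≤ i) (h2 : i < m) :
    valAt (ins τ p) (i+1) = valAt τ i := by
  rw [valAt, dif_pos (by omega : i + 1 < m + 1), valAt, dif_pos h2]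
  have : (⟨i+1, by omega⟩ : Fin (m+1)) = p.succAbove ⟨i, h2⟩ := by
    rw [Fin.succAbove_of_le_castSucc]
    · rfl
    · rw [Fin.le_def]; exact h1
  rw [this, ins_apply_succAbove]
  simp

lemma majP_eq_majF {k : ℕ} (σ : Equiv.Perm (Fin k)) : majP σ = majF (valAt σ) k := by
  rw [majP, desSet, majF, Finset.sum_filter]
  rfl

lemma majP_ins {m : ℕ} (τ : Equiv.Perm (Fin m)) (p : Fin (m+1)) :
    majP (ins τ p) = majP τ + incr (valAt τ) m p.val := by
  rw [majP_eq_majF, majP_eq_majF]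
  exact majF_insert (valAt τ) (valAt (ins τ p)) m p.val m (by have := p.is_le; omega)
    (valAt_lt τ) (valAt_ins_lt τ p) (valAt_ins_self τ p) (valAt_ins_ge τ p)

/-! ### invNum of an inserted permutation -/

lemma lt_succAbove_iff' {m : ℕ} (p : Fin (m+1)) (b : Fin m) :
    p < p.succAbove b ↔ p.val ≤ b.val := by
  rcases lt_or_ge (b.castSucc) p with h | h
  · rw [Fin.succAbove_of_castSucc_lt _ _ h]
    rw [Fin.lt_def] at h ⊢
    simp only [Fin.coe_castSucc] at *
    omega
  · rw [Fin.succAbove_of_le_castSucc _ _ h]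
    rw [Fin.le_def] at h
    rw [Fin.lt_def]
    simp only [Fin.coe_castSucc, Fin.val_succ] at *
    omega

lemma symm_none' {m : ℕ} (p : Fin (m+1)) : (finSuccEquiv' p).symm none = p := by
  rw [finSuccEquiv'_symm_none]

lemma symm_some' {m : ℕ} (p : Fin (m+1)) (j : Fin m) :
    (finSuccEquiv' p).symm (some j) = p.succAbove j := by
  rw [finSuccEquiv'_symm_some]

lemma invNum_eq_sum {k : ℕ} (ρ : Equiv.Perm (Fin k)) :
    invNum ρ = ∑ i : Fin k, ∑ j : Fin k, (if i < j ∧ ρ j < ρ i then 1 else 0) := by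
  rw [invNum, Finset.card_filter]
  exact Fintype.sum_prod_type _

lemma invNum_ins {m : ℕ} (τ : Equiv.Perm (Fin m)) (p : Fin (m+1)) :
    invNum (ins τ p) = invNum τ + (m - p.val) := by
  have hself : ins τ p p = Fin.last m := ins_apply_self τ p
  have hab : ∀ j, ins τ p (p.succAbove j) = (τ j).castSucc := ins_apply_succAbove τ p
  rw [invNum_eq_sum, invNum_eq_sum]
  set σ := ins τ p with hσ
  have e := (finSuccEquiv' p).symm
  rw [← Equiv.sum_comp (finSuccEquiv' p).symm
    (fun i => ∑ j : Fin (m+1), (if i < j ∧ σ j < σ i then (1:ℕ) else 0))]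
  have inner : ∀ i : Fin (m+1), ∑ j : Fin (m+1), (if i < j ∧ σ j < σ i then (1:ℕ) else 0)
      = ∑ o : Option (Fin m), (if i < (finSuccEquiv' p).symm o ∧
          σ ((finSuccEquiv' p).symm o) < σ i then (1:ℕ) else 0) := by
    intro i
    rw [← Equiv.sum_comp (finSuccEquiv' p).symm
      (fun j => (if i < j ∧ σ j < σ i then (1:ℕ) else 0))]
  rw [Finset.sum_congr rfl (fun o _ => inner _)]
  rw [Fintype.sum_option]
  simp only [symm_none', symm_some']
  have piece1 : ∑ o : Option (Fin m), (if p < (finSuccEquiv' p).symm o ∧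
      σ ((finSuccEquiv' p).symm o) < σ p then (1:ℕ) else 0) = m - p.val := by
    rw [Fintype.sum_option]
    simp only [symm_none', symm_some']
    rw [if_neg (by simp)]
    have hterm : ∀ b : Fin m, (if p < p.succAbove b ∧ σ (p.succAbove b) < σ p then (1:ℕ) else 0)
        = if p.val ≤ b.val then 1 else 0 := by
      intro b
      rw [hself, hab]
      have h2 : (τ b).castSucc < Fin.last m := Fin.castSucc_lt_last _
      by_cases hle : p.val ≤ b.val
      · rw [if_pos ⟨(lt_succAbove_iff' p b).2 hle, h2⟩, if_pos hle]
      · rw [if_neg (fun hc => hle ((lt_succAbove_iff' p b).1 hc.1)), if_neg hle]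
    rw [Finset.sum_congr rfl (fun b _ => hterm b), Nat.zero_add]
    rw [Fin.sum_univ_eq_sum_range (fun j => if p.val ≤ j then (1:ℕ) else 0)]
    rw [← Finset.card_filter]
    have hfil : (Finset.range m).filter (fun i => p.val ≤ i) = Finset.Ico p.val m := by
      ext x; simp [Finset.mem_Ico, Finset.mem_filter, Finset.mem_range]; omega
    rw [hfil]
    simp [Nat.card_Ico]
  have piece2 : ∀ a : Fin m, ∑ o : Option (Fin m),
      (if p.succAbove a < (finSuccEquiv' p).symm o ∧
        σ ((finSuccEquiv' p).symm o) < σ (p.succAbove a) then (1:ℕ) else 0)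
      = ∑ b : Fin m, (if a < b ∧ τ b < τ a then (1:ℕ) else 0) := by
    intro a
    rw [Fintype.sum_option]
    simp only [symm_none', symm_some']
    rw [if_neg (by
      rintro ⟨-, hlt⟩
      rw [hself, hab] at hlt
      exact absurd hlt (not_lt.2 (Fin.le_last _)))]
    rw [Nat.zero_add]
    apply Finset.sum_congr rfl
    intro b _
    simp only [hab]
    congr 1
    rw [eq_iff_iff]
    constructor
    · rintro ⟨h1, h2⟩
      exact ⟨(Fin.succAbove_lt_succAbove_iff).1 h1, (Fin.castSucc_lt_castSucc_iff).1 h2⟩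
    · rintro ⟨h1, h2⟩
      exact ⟨(Fin.succAbove_lt_succAbove_iff).2 h1, (Fin.castSucc_lt_castSucc_iff).2 h2⟩
  rw [piece1, Finset.sum_congr rfl (fun a _ => piece2 a)]
  omega

end MacMahonAux

/-- MacMahon's equidistribution theorem:
`Σ_{σ ∈ S_n} q^{maj σ} = Σ_{σ ∈ S_n} q^{inv σ}`. -/
theorem stmt16 (n : ℕ) :
    ∑ σ : Equiv.Perm (Fin n), (Polynomial.X : Polynomial ℤ) ^ majP σ =
      ∑ σ : Equiv.Perm (Fin n), (Polynomial.X : Polynomial ℤ) ^ invNum σ := by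
  induction n with
  | zero =>
    apply Finset.sum_congr rfl
    intro σ _
    simp [majP, desSet, invNum]
  | succ m ih =>
    have hgeo := fun (τ : Equiv.Perm (Fin m)) => MacMahonAux.sum_pow_incr (valAt τ) m
    have hmaj : ∑ σ : Equiv.Perm (Fin (m+1)), (Polynomial.X : Polynomial ℤ) ^ majP σ
        = (∑ k ∈ Finset.range (m+1), (Polynomial.X : Polynomial ℤ) ^ k)
          * ∑ τ : Equiv.Perm (Fin m), (Polynomial.X : Polynomial ℤ) ^ majP τ := by
      rw [← Function.Bijective.sum_comp (MacMahonAux.ins_bijective m)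
        (fun σ => (Polynomial.X : Polynomial ℤ) ^ majP σ)]
      rw [Fintype.sum_prod_type]
      rw [Finset.mul_sum]
      apply Finset.sum_congr rfl
      intro τ _
      calc ∑ p : Fin (m+1), (Polynomial.X : Polynomial ℤ) ^ majP (MacMahonAux.ins τ p)
          = ∑ p : Fin (m+1), (Polynomial.X : Polynomial ℤ) ^ majP τ
              * (Polynomial.X : Polynomial ℤ) ^ MacMahonAux.incr (valAt τ) m p.val := by
            apply Finset.sum_congr rfl
            intro p _
            rw [MacMahonAux.majP_ins, pow_add]
        _ = (Polynomial.X : Polynomial ℤ) ^ majP τ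
              * ∑ p ∈ Finset.range (m+1),
                  (Polynomial.X : Polynomial ℤ) ^ MacMahonAux.incr (valAt τ) m p := by
            rw [← Finset.mul_sum,
              Fin.sum_univ_eq_sum_range
                (fun j => (Polynomial.X : Polynomial ℤ) ^ MacMahonAux.incr (valAt τ) m j)]
        _ = (∑ k ∈ Finset.range (m+1), (Polynomial.X : Polynomial ℤ) ^ k)
              * (Polynomial.X : Polynomial ℤ) ^ majP τ := by
            rw [hgeo τ, mul_comm]
    have hinv : ∑ σ : Equiv.Perm (Fin (m+1)), (Polynomial.X : Polynomial ℤ) ^ invNum σ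
        = (∑ k ∈ Finset.range (m+1), (Polynomial.X : Polynomial ℤ) ^ k)
          * ∑ τ : Equiv.Perm (Fin m), (Polynomial.X : Polynomial ℤ) ^ invNum τ := by
      rw [← Function.Bijective.sum_comp (MacMahonAux.ins_bijective m)
        (fun σ => (Polynomial.X : Polynomial ℤ) ^ invNum σ)]
      rw [Fintype.sum_prod_type]
      rw [Finset.mul_sum]
      apply Finset.sum_congr rfl
      intro τ _
      calc ∑ p : Fin (m+1), (Polynomial.X : Polynomial ℤ) ^ invNum (MacMahonAux.ins τ p)
          = ∑ p : Fin (m+1), (Polynomial.X : Polynomial ℤ) ^ invNum τ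
              * (Polynomial.X : Polynomial ℤ) ^ (m - p.val) := by
            apply Finset.sum_congr rfl
            intro p _
            rw [MacMahonAux.invNum_ins, pow_add]
        _ = (Polynomial.X : Polynomial ℤ) ^ invNum τ
              * ∑ p ∈ Finset.range (m+1), (Polynomial.X : Polynomial ℤ) ^ (m - p) := by
            rw [← Finset.mul_sum,
              Fin.sum_univ_eq_sum_range (fun j => (Polynomial.X : Polynomial ℤ) ^ (m - j))]
        _ = (∑ k ∈ Finset.range (m+1), (Polynomial.X : Polynomial ℤ) ^ k)
              * (Polynomial.X : Polynomial ℤ) ^ invNum τ := by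
            rw [mul_comm]
            congr 1
            have := Finset.sum_range_reflect
              (fun j => (Polynomial.X : Polynomial ℤ) ^ j) (m+1)
            simpa using this
    rw [hmaj, hinv, ih]
end
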